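/- Suppose the inner product ⟨·,·⟩ on 𝔪 is naturally reductive, i.e. ⟨[X,Y]_𝔪,Z⟩ + ⟨Y,[X,Z]_𝔪⟩ = 0 for all X,Y,Z ∈ 𝔪. Let Λ : 𝔪 → End(𝔪) be a linear map with each Λ(X) skew-adjoint, and T(X,Y) := Λ(X)Y − Λ(Y)X − [X,Y]_𝔪. Then the trilinear form ⟨T(X,Y),Z⟩ is totally skew-symmetric if and only if Λ(X)X = 0 for all X ∈ 𝔪. -/
import Mathlib


/-- If the inner product on `𝔪` is naturally reductive, then the torsion
trilinear form `⟨Λ(X)Y − Λ(Y)X − [X,Y]_𝔪, Z⟩` is totally skew-symmetric iff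
`Λ(X)X = 0` for all `X ∈ 𝔪`. -/
theorem stmt1
    {𝔤 : Type*} [LieRing 𝔤] [LieAlgebra ℝ 𝔤] [FiniteDimensional ℝ 𝔤]
    (𝔥 𝔪 : Submodule ℝ 𝔤)
    (p𝔥 p𝔪 : 𝔤 →ₗ[ℝ] 𝔤)
    (hsum : ∀ x, p𝔥 x + p𝔪 x = x)
    (hmem𝔥 : ∀ x, p𝔥 x ∈ 𝔥) (hmem𝔪 : ∀ x, p𝔪 x ∈ 𝔪)
    (hid𝔥 : ∀ x ∈ 𝔥, p𝔥 x = x) (hid𝔪 : ∀ x ∈ 𝔪, p𝔪 x = x)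
    (hsub : ∀ x ∈ 𝔥, ∀ y ∈ 𝔥, ⁅x, y⁆ ∈ 𝔥)
    (hhm : ∀ x ∈ 𝔥, ∀ y ∈ 𝔪, ⁅x, y⁆ ∈ 𝔪)
    (B : LinearMap.BilinForm ℝ 𝔤)
    (hBsymm : ∀ x ∈ 𝔪, ∀ y ∈ 𝔪, B x y = B y x)
    (hBpos : ∀ x ∈ 𝔪, x ≠ 0 → 0 < B x x)
    (hnat : ∀ x ∈ 𝔪, ∀ y ∈ 𝔪, ∀ z ∈ 𝔪, B (p𝔪 ⁅x, y⁆) z + B y (p𝔪 ⁅x, z⁆) = 0)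
    (Λ : 𝔤 →ₗ[ℝ] 𝔤 →ₗ[ℝ] 𝔤)
    (hΛmem : ∀ x ∈ 𝔪, ∀ y ∈ 𝔪, Λ x y ∈ 𝔪)
    (hΛskew : ∀ x ∈ 𝔪, ∀ y ∈ 𝔪, ∀ z ∈ 𝔪, B (Λ x y) z + B y (Λ x z) = 0) :
    (∀ x ∈ 𝔪, ∀ y ∈ 𝔪, ∀ z ∈ 𝔪,
        B (Λ x y - Λ y x - p𝔪 ⁅x, y⁆) z = - B (Λ y x - Λ x y - p𝔪 ⁅y, x⁆) z ∧
        B (Λ x y - Λ y x - p𝔪 ⁅x, y⁆) z = - B (Λ x z - Λ z x - p𝔪 ⁅x, z⁆) y) ↔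
    (∀ x ∈ 𝔪, Λ x x = 0) := by

  constructor
  · intro h w hw
    -- First show B (Λ w x) w = 0 for all x ∈ 𝔪
    have key : ∀ x ∈ 𝔪, B (Λ w x) w = 0 := by
      intro x hx
      have h2 := (h x hx w hw w hw).2
      have hskw : B (Λ x w) w = 0 := by
        have := hΛskew x hx w hw w hw
        have hsym := hBsymm (Λ x w) (hΛmem x hx w hw) w hw
        linarith
      have hnt : B (p𝔪 ⁅x, w⁆) w = 0 := by
        have := hnat x hx w hw w hw
        have hsym := hBsymm (p𝔪 ⁅x, w⁆) (hmem𝔪 _) w hw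
        linarith
      have hexp : B (Λ x w - Λ w x - p𝔪 ⁅x, w⁆) w
          = B (Λ x w) w - B (Λ w x) w - B (p𝔪 ⁅x, w⁆) w := by
        simp [map_sub, LinearMap.sub_apply]
      rw [hexp] at h2
      linarith
    have hz : ∀ x ∈ 𝔪, B (Λ w w) x = 0 := by
      intro x hx
      have h1 := hΛskew w hw x hx w hw
      have h2 := key x hx
      have hsym := hBsymm x hx (Λ w w) (hΛmem w hw w hw)
      linarith
    by_contra hne
    have := hBpos (Λ w w) (hΛmem w hw w hw) hne
    have := hz (Λ w w) (hΛmem w hw w hw)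
    linarith
  · intro h x hx y hy z hz
    have hpol : ∀ a ∈ 𝔪, ∀ b ∈ 𝔪, Λ a b = - Λ b a := by
      intro a ha b hb
      have h0 := h (a + b) (𝔪.add_mem ha hb)
      have ha0 := h a ha
      have hb0 := h b hb
      simp only [map_add, LinearMap.add_apply, ha0, hb0, zero_add, add_zero] at h0
      rw [add_comm] at h0; exact eq_neg_of_add_eq_zero_left h0
    constructor
    · have hlie : p𝔪 ⁅y, x⁆ = - p𝔪 ⁅x, y⁆ := by
        rw [← lie_skew, map_neg]
      rw [hlie]
      have : Λ y x - Λ x y - - p𝔪 ⁅x, y⁆ = -(Λ x y - Λ y x - p𝔪 ⁅x, y⁆) := by abel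
      rw [this, map_neg]
      simp
    · have h1 := hΛskew x hx y hy z hz
      have h2 := hnat x hx y hy z hz
      have hsymΛ := hBsymm y hy (Λ x z) (hΛmem x hx z hz)
      have hsymp := hBsymm y hy (p𝔪 ⁅x, z⁆) (hmem𝔪 _)
      have hyx : Λ y x = - Λ x y := hpol y hy x hx
      have hzx : Λ z x = - Λ x z := hpol z hz x hx
      have e1 : B (Λ x y - Λ y x - p𝔪 ⁅x, y⁆) z
          = B (Λ x y) z - B (Λ y x) z - B (p𝔪 ⁅x, y⁆) z := by
        simp [map_sub, LinearMap.sub_apply]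
      have e2 : B (Λ x z - Λ z x - p𝔪 ⁅x, z⁆) y
          = B (Λ x z) y - B (Λ z x) y - B (p𝔪 ⁅x, z⁆) y := by
        simp [map_sub, LinearMap.sub_apply]
      have e3 : B (Λ y x) z = - B (Λ x y) z := by rw [hyx]; simp
      have e4 : B (Λ z x) y = - B (Λ x z) y := by rw [hzx]; simp
      rw [e1, e2, e3, e4]
      linarith
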